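/- Let X be a finite dimensional strictly convex real normed linear space. If a continuous linear operator T on X is a left symmetric point of the space of operators (with the operator norm), then for each x ∈ M_T the vector Tx is a left symmetric point of X. -/

import Mathlib

/-- Birkhoff-James orthogonality: `x ⊥_B y` iff `‖x + λ y‖ ≥ ‖x‖` for all real `λ`. -/
def BJOrth {X : Type*} [NormedAddCommGroup X] [NormedSpace ℝ X] (x y : X) : Prop :=
  ∀ l : ℝ, ‖x‖ ≤ ‖x + l • y‖

/-- `x` is a left symmetric point: `x ⊥_B y` implies `y ⊥_B x` for every `y`. -/
def LeftSymPoint {X : Type*} [NormedAddCommGroup X] [NormedSpace ℝ X] (x : X) : Prop :=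
  ∀ y : X, BJOrth x y → BJOrth y x

/-- The norm attainment set `M_T` of a continuous linear operator `T`. -/
def normAttainSet {X : Type*} [NormedAddCommGroup X] [NormedSpace ℝ X]
    (T : X →L[ℝ] X) : Set X :=
  {x : X | ‖x‖ = 1 ∧ ‖T x‖ = ‖T‖}


open ContinuousLinearMap

section Aux
variable {X : Type*} [NormedAddCommGroup X] [NormedSpace ℝ X] [FiniteDimensional ℝ X]

/-- On a finite dimensional nontrivial space, the operator norm is attained at a unit vector. -/
lemma exists_max_unit [Nontrivial X] (B : X →L[ℝ] X) :
    ∃ u : X, ‖u‖ = 1 ∧ ‖B u‖ = ‖B‖ := by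
  obtain ⟨u, huS, hmax⟩ := (isCompact_sphere (0:X) 1).exists_isMaxOn
    (NormedSpace.sphere_nonempty.2 zero_le_one)
    (B.continuous.norm.continuousOn)
  rw [mem_sphere_zero_iff_norm] at huS
  refine ⟨u, huS, le_antisymm (B.unit_le_opNorm u huS.le) ?_⟩
  refine B.opNorm_le_bound (norm_nonneg _) fun z => ?_
  rcases eq_or_ne z 0 with rfl | hz
  · simp
  · have hz0 : (0:ℝ) < ‖z‖ := norm_pos_iff.2 hz
    have h1 : ‖(‖z‖⁻¹ • z)‖ = 1 := by
      rw [norm_smul, norm_inv, norm_norm, inv_mul_cancel₀ hz0.ne']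
    have h2 : ‖B (‖z‖⁻¹ • z)‖ ≤ ‖B u‖ := hmax (mem_sphere_zero_iff_norm.2 h1)
    rw [map_smul, norm_smul, norm_inv, norm_norm] at h2
    calc ‖B z‖ = ‖z‖ * (‖z‖⁻¹ * ‖B z‖) := by field_simp
    _ ≤ ‖z‖ * ‖B u‖ := by exact mul_le_mul_of_nonneg_left h2 hz0.le
    _ = ‖B u‖ * ‖z‖ := mul_comm _ _

/-- Key compactness lemma: if `A ⊥_B T` then there is a unit vector `u` where `A` attains
its norm and `‖A u + l • T u‖ ≥ ‖A‖` for all `l ≥ 0`. -/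
lemma key_lemma [Nontrivial X] (A T : X →L[ℝ] X)
    (h : ∀ l : ℝ, ‖A‖ ≤ ‖A + l • T‖) :
    ∃ u : X, ‖u‖ = 1 ∧ ‖A u‖ = ‖A‖ ∧ ∀ l : ℝ, 0 ≤ l → ‖A‖ ≤ ‖A u + l • T u‖ := by
  set t : ℕ → ℝ := fun n => ((n : ℝ) + 1)⁻¹ with ht
  have htpos : ∀ n, 0 < t n := fun n => by positivity
  have htlim : Filter.Tendsto t Filter.atTop (nhds 0) := by
    simpa [ht, one_div] using tendsto_one_div_add_atTop_nhds_zero_nat (𝕜 := ℝ)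
  have hseq : ∀ n : ℕ, ∃ u : X, ‖u‖ = 1 ∧ ‖(A + t n • T) u‖ = ‖A + t n • T‖ :=
    fun n => exists_max_unit _
  choose v hv1 hv2 using hseq
  -- the crucial one-sided estimate at each vₙ, for every l ≥ tₙ
  have hstep : ∀ n, ∀ l : ℝ, t n ≤ l → ‖A‖ ≤ ‖A (v n) + l • T (v n)‖ := by
    intro n l hl
    have hl0 : 0 < l := lt_of_lt_of_le (htpos n) hl
    set a := A (v n); set b := T (v n)
    have hA1 : ‖A‖ ≤ ‖a + t n • b‖ := by
      have := (h (t n)).trans (hv2 n).symm.le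
      simpa [a, b] using this
    have ha : ‖a‖ ≤ ‖A‖ := A.unit_le_opNorm (v n) (hv1 n).le
    set s : ℝ := t n / l with hs
    have hs0 : 0 < s := div_pos (htpos n) hl0
    have hs1 : s ≤ 1 := (div_le_one hl0).2 hl
    have hdecomp : a + t n • b = (1 - s) • a + s • (a + l • b) := by
      have : s * l = t n := div_mul_cancel₀ _ hl0.ne'
      rw [smul_add, smul_smul, this]
      module
    have hconv : ‖a + t n • b‖ ≤ (1 - s) * ‖a‖ + s * ‖a + l • b‖ := by
      rw [hdecomp]
      refine (norm_add_le _ _).trans ?_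
      rw [norm_smul, norm_smul, Real.norm_eq_abs, Real.norm_eq_abs,
        abs_of_nonneg (by linarith), abs_of_nonneg hs0.le]
    nlinarith [hA1, ha, hconv]
  obtain ⟨u, huS, φ, hφ, hconv⟩ := (isCompact_sphere (0:X) 1).tendsto_subseq
    (fun n => mem_sphere_zero_iff_norm.2 (hv1 n))
  rw [mem_sphere_zero_iff_norm] at huS
  have htφ : Filter.Tendsto (fun n => t (φ n)) Filter.atTop (nhds 0) :=
    htlim.comp hφ.tendsto_atTop
  have hAu : ‖A u‖ = ‖A‖ := by
    refine le_antisymm (A.unit_le_opNorm u huS.le) ?_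
    have hlow : ∀ n, ‖A‖ - t (φ n) * ‖T‖ ≤ ‖A (v (φ n))‖ := by
      intro n
      have h1 : ‖A‖ ≤ ‖A (v (φ n)) + t (φ n) • T (v (φ n))‖ :=
        hstep (φ n) (t (φ n)) le_rfl
      have h2 : ‖A (v (φ n)) + t (φ n) • T (v (φ n))‖ ≤ ‖A (v (φ n))‖ + t (φ n) * ‖T‖ := by
        refine (norm_add_le _ _).trans ?_
        gcongr
        rw [norm_smul, Real.norm_eq_abs, abs_of_nonneg (htpos _).le]
        exact mul_le_mul_of_nonneg_left (T.unit_le_opNorm _ (hv1 _).le) (htpos _).le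
      linarith
    have hT1 : Filter.Tendsto (fun n => ‖A‖ - t (φ n) * ‖T‖) Filter.atTop (nhds ‖A‖) := by
      have h0 : Filter.Tendsto (fun n => t (φ n) * ‖T‖) Filter.atTop (nhds 0) := by
        simpa using htφ.mul_const ‖T‖
      simpa using (tendsto_const_nhds (x := ‖A‖)).sub h0
    have hT2 : Filter.Tendsto (fun n => ‖A (v (φ n))‖) Filter.atTop (nhds ‖A u‖) :=
      ((A.continuous.norm).continuousAt.tendsto.comp hconv)
    exact le_of_tendsto_of_tendsto' hT1 hT2 hlow
  refine ⟨u, huS, hAu, fun l hl => ?_⟩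
  rcases eq_or_lt_of_le hl with rfl | hl0
  · simpa [hAu] using le_rfl
  · have hev : ∀ᶠ n in Filter.atTop, ‖A‖ ≤ ‖A (v (φ n)) + l • T (v (φ n))‖ := by
      filter_upwards [htφ.eventually (gt_mem_nhds hl0)] with n hn
      exact hstep (φ n) l hn.le
    have hT2 : Filter.Tendsto (fun n => ‖A (v (φ n)) + l • T (v (φ n))‖)
        Filter.atTop (nhds ‖A u + l • T u‖) := by
      have : Continuous fun z : X => ‖A z + l • T z‖ :=
        (A.continuous.add ((continuous_const_smul l).comp T.continuous)).norm
      exact this.continuousAt.tendsto.comp hconv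
    exact ge_of_tendsto hT2 hev

end Aux
section Main
open ContinuousLinearMap
variable {X : Type*} [NormedAddCommGroup X] [NormedSpace ℝ X]

/-- In a strictly convex space, a norm-one functional attains its norm at most at one
unit vector. -/
lemma unit_eq_of_functional [StrictConvexSpace ℝ X] {f : X →L[ℝ] ℝ} (hf : ‖f‖ = 1)
    {x u : X} (hx : ‖x‖ = 1) (hu : ‖u‖ = 1) (hfx : f x = 1) (hfu : f u = 1) : x = u := by
  have h1 : (2:ℝ) ≤ ‖x + u‖ := by
    have h2 : f (x + u) ≤ ‖x + u‖ := by
      calc f (x + u) ≤ ‖f (x + u)‖ := le_abs_self _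
      _ ≤ ‖f‖ * ‖x + u‖ := f.le_opNorm _
      _ = ‖x + u‖ := by rw [hf, one_mul]
    rw [map_add, hfx, hfu] at h2; linarith
  have h3 : ‖x + u‖ = ‖x‖ + ‖u‖ := by
    refine le_antisymm (norm_add_le _ _) ?_
    rw [hx, hu]; linarith
  exact eq_of_norm_eq_of_norm_add_eq (hx.trans hu.symm) h3

theorem leftSym_operator_image' {X : Type*} [NormedAddCommGroup X] [NormedSpace ℝ X]
    [FiniteDimensional ℝ X] [StrictConvexSpace ℝ X] (T : X →L[ℝ] X)
    (hT : LeftSymPoint T) :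
    ∀ x ∈ normAttainSet T, LeftSymPoint (T x) := by
  rintro x ⟨hx1, hx2⟩ y hy
  by_cases hTx : T x = 0
  · intro l; rw [hTx]; simp
  by_cases hy0 : y = 0
  · intro l; subst hy0; simp
  have hx0 : x ≠ 0 := by intro h; rw [h, norm_zero] at hx1; norm_num at hx1
  haveI : Nontrivial X := nontrivial_of_ne x 0 hx0
  obtain ⟨f, hf1, hfx0⟩ := exists_dual_vector ℝ x (norm_ne_zero_iff.2 hx0)
  have hfx : f x = 1 := by rw [hfx0, hx1]; norm_num
  set A : X →L[ℝ] X := f.smulRight y with hA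
  have hAapp : ∀ z, A z = f z • y := fun z => rfl
  have hAnorm : ‖A‖ = ‖y‖ := by rw [hA, norm_smulRight_apply, hf1, one_mul]
  -- T ⊥_B A
  have hTA : BJOrth T A := by
    intro l
    calc ‖T‖ = ‖T x‖ := hx2.symm
    _ ≤ ‖T x + l • y‖ := hy l
    _ = ‖(T + l • A) x‖ := by
        rw [add_apply, smul_apply, hAapp, hfx, one_smul]
    _ ≤ ‖T + l • A‖ := (T + l • A).unit_le_opNorm x hx1.le
  have hAT : BJOrth A T := hT A hTA
  -- identification: any unit norm-attaining vector of A is ±x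
  have hident : ∀ u : X, ‖u‖ = 1 → ‖A u‖ = ‖A‖ →
      (A u = y ∧ T u = T x) ∨ (A u = -y ∧ T u = -(T x)) := by
    intro u hu1 hu2
    have hy' : ‖y‖ ≠ 0 := norm_ne_zero_iff.2 hy0
    rw [hAapp, norm_smul, Real.norm_eq_abs, hAnorm] at hu2
    have hfu : |f u| = 1 := mul_right_cancel₀ hy' (hu2.trans (one_mul ‖y‖).symm)
    rcases (abs_eq (zero_le_one)).1 hfu with h1 | h1
    · left
      have hxu : x = u := unit_eq_of_functional hf1 hx1 hu1 hfx h1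
      rw [hAapp, h1, one_smul, ← hxu]
      exact ⟨rfl, rfl⟩
    · right
      have hfu' : f (-u) = 1 := by rw [map_neg, h1, neg_neg]
      have hxu : x = -u := unit_eq_of_functional hf1 hx1 (by rw [norm_neg, hu1]) hfx hfu'
      have hux : u = -x := by rw [hxu, neg_neg]
      rw [hAapp, h1, neg_one_smul, hux, map_neg]
      exact ⟨rfl, rfl⟩
  -- positive side
  have hpos : ∀ l : ℝ, 0 ≤ l → ‖y‖ ≤ ‖y + l • T x‖ := by
    obtain ⟨u, hu1, hu2, hu3⟩ := key_lemma A T hAT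
    intro l hl
    have := hu3 l hl
    rcases hident u hu1 hu2 with ⟨e1, e2⟩ | ⟨e1, e2⟩
    · rwa [e1, e2, hAnorm] at this
    · rw [e1, e2, hAnorm, smul_neg, ← neg_add, norm_neg] at this
      exact this
  -- negative side
  have hAT' : BJOrth A (-T) := by
    intro l
    have := hAT (-l)
    rwa [neg_smul, ← smul_neg] at this
  have hneg : ∀ l : ℝ, 0 ≤ l → ‖y‖ ≤ ‖y + (-l) • T x‖ := by
    obtain ⟨u, hu1, hu2, hu3⟩ := key_lemma A (-T) hAT'
    intro l hl
    have h := hu3 l hl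
    rcases hident u hu1 hu2 with ⟨e1, e2⟩ | ⟨e1, e2⟩
    · rw [neg_apply, e2, e1, hAnorm] at h
      have he : y + (-l) • T x = y + l • -T x := by module
      rw [he]; exact h
    · rw [neg_apply, e2, neg_neg, e1, hAnorm] at h
      have he : y + (-l) • T x = -(-y + l • T x) := by module
      rw [he, norm_neg]; exact h
  intro l
  rcases le_or_gt 0 l with h | h
  · exact hpos l h
  · have := hneg (-l) (by linarith)
    rwa [neg_neg] at this
end Main

theorem leftSym_operator_image {X : Type*} [NormedAddCommGroup X] [NormedSpace ℝ X]
    [FiniteDimensional ℝ X] [StrictConvexSpace ℝ X] (T : X →L[ℝ] X)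
    (hT : LeftSymPoint T) :
    ∀ x ∈ normAttainSet T, LeftSymPoint (T x) :=
  leftSym_operator_image' T hT
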